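/- Let n ≥ 3 and let A be a real symmetric n×n matrix with trace(A) = 0. Then trace(A³) = -((n-2)/√(n(n-1))) · ‖A‖³ holds if and only if there exists λ ≥ 0 such that A has eigenvalue λ with multiplicity n-1 and eigenvalue -(n-1)λ with multiplicity 1; equivalently, A is orthogonally diagonalizable with n-1 diagonal entries equal to λ and one equal to -(n-1)λ. -/

import Mathlib

open Finset

private lemma okumura_sum_ite {n : ℕ} (j : Fin n) (x y : ℝ) :
    ∑ i : Fin n, (if i = j then x else y) = x + ((n : ℝ) - 1) * y := by
  have h : ∀ i : Fin n, (if i = j then x else y) = (if i = j then x - y else 0) + y := by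
    intro i; split <;> ring
  simp_rw [h]
  rw [Finset.sum_add_distrib, Finset.sum_ite_eq' Finset.univ j (fun _ => x - y),
    Finset.sum_const, Finset.card_univ, Fintype.card_fin, nsmul_eq_mul]
  simp
  ring

private lemma okumura_sqrt_cube {n : ℕ} (hn : 3 ≤ n) (lam : ℝ) (hlam : 0 ≤ lam) :
    -(((n : ℝ) - 2) / Real.sqrt ((n : ℝ) * ((n : ℝ) - 1))) *
      (Real.sqrt ((n : ℝ) * ((n : ℝ) - 1)) * lam) ^ 3 =
    -((n : ℝ) * ((n : ℝ) - 1) * ((n : ℝ) - 2)) * lam ^ 3 := by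
  have hn3 : (3 : ℝ) ≤ (n : ℝ) := by exact_mod_cast hn
  set r := Real.sqrt ((n : ℝ) * ((n : ℝ) - 1)) with hr_def
  have hr2 : r ^ 2 = (n : ℝ) * ((n : ℝ) - 1) := Real.sq_sqrt (by nlinarith)
  have hr : 0 < r := Real.sqrt_pos.mpr (by nlinarith)
  have h3 : (r * lam) ^ 3 = ((n : ℝ) * ((n : ℝ) - 1)) * r * lam ^ 3 := by
    linear_combination (r * lam ^ 3) * hr2
  rw [h3]
  field_simp

private lemma okumura_scalar {n : ℕ} (hn : 3 ≤ n) (μ : Fin n → ℝ)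
    (h0 : ∑ i, μ i = 0)
    (heq : ∑ i, (μ i) ^ 3 =
      -(((n : ℝ) - 2) / Real.sqrt ((n : ℝ) * ((n : ℝ) - 1))) *
        (Real.sqrt (∑ i, (μ i) ^ 2)) ^ 3) :
    ∃ lam : ℝ, 0 ≤ lam ∧ ∃ j : Fin n,
      μ = fun i => if i = j then -((n : ℝ) - 1) * lam else lam := by
  have hn3 : (3 : ℝ) ≤ (n : ℝ) := by exact_mod_cast hn
  set r := Real.sqrt ((n : ℝ) * ((n : ℝ) - 1)) with hr_def
  have hr2 : r ^ 2 = (n : ℝ) * ((n : ℝ) - 1) := Real.sq_sqrt (by nlinarith)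
  have hr : 0 < r := Real.sqrt_pos.mpr (by nlinarith)
  have hq : 0 ≤ ∑ i, (μ i) ^ 2 := Finset.sum_nonneg fun i _ => sq_nonneg _
  set s := Real.sqrt (∑ i, (μ i) ^ 2) with hs_def
  have hs0 : 0 ≤ s := Real.sqrt_nonneg _
  have hs2 : s ^ 2 = ∑ i, (μ i) ^ 2 := Real.sq_sqrt hq
  set lam := s / r with hlam_def
  have hlam : 0 ≤ lam := div_nonneg hs0 hr.le
  have hs : s = r * lam := by rw [hlam_def, mul_div_assoc', eq_div_iff hr.ne', mul_comm]
  have hsum2 : ∑ i, (μ i) ^ 2 = (n : ℝ) * ((n : ℝ) - 1) * lam ^ 2 := by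
    rw [← hs2, hs]; rw [mul_pow, hr2]
  have hsum3 : ∑ i, (μ i) ^ 3 = -((n : ℝ) * ((n : ℝ) - 1) * ((n : ℝ) - 2)) * lam ^ 3 := by
    rw [heq, hs]; exact okumura_sqrt_cube hn lam hlam
  -- lower bound on each eigenvalue
  have hbd : ∀ i, 0 ≤ μ i + ((n : ℝ) - 1) * lam := by
    intro i
    have herase : ∑ j ∈ Finset.univ.erase i, μ j = -μ i := by
      rw [Finset.sum_erase_eq_sub (Finset.mem_univ i), h0]; ring
    have hcs : (∑ j ∈ Finset.univ.erase i, μ j) ^ 2 ≤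
        (#(Finset.univ.erase i) : ℝ) * ∑ j ∈ Finset.univ.erase i, (μ j) ^ 2 :=
      sq_sum_le_card_mul_sum_sq
    have hcard : (#(Finset.univ.erase i) : ℝ) = (n : ℝ) - 1 := by
      rw [Finset.card_erase_of_mem (Finset.mem_univ i), Finset.card_univ, Fintype.card_fin]
      have : 1 ≤ n := by omega
      push_cast [Nat.cast_sub this]
      ring
    have hsub : ∑ j ∈ Finset.univ.erase i, (μ j) ^ 2 = (∑ j, (μ j) ^ 2) - (μ i) ^ 2 :=
      Finset.sum_erase_eq_sub (Finset.mem_univ i)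
    rw [herase, hcard, hsub, hsum2] at hcs
    -- (μ i)^2 ≤ (n-1)((n)(n-1)lam² - μ i²)  ⇒ μ i² ≤ ((n-1)lam)²
    have hsq : (μ i) ^ 2 ≤ (((n : ℝ) - 1) * lam) ^ 2 := by nlinarith
    nlinarith [sq_nonneg (μ i + ((n : ℝ) - 1) * lam), sq_nonneg (μ i), mul_nonneg (by linarith : (0:ℝ) ≤ (n : ℝ) - 1) hlam]
  -- key identity
  have hid : ∑ i, (μ i - lam) ^ 2 * (μ i + ((n : ℝ) - 1) * lam) = 0 := by
    have hterm : ∀ i : Fin n, (μ i - lam) ^ 2 * (μ i + ((n : ℝ) - 1) * lam) =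
        (μ i) ^ 3 + ((n : ℝ) - 3) * lam * (μ i) ^ 2 + (3 - 2 * (n : ℝ)) * lam ^ 2 * (μ i)
          + ((n : ℝ) - 1) * lam ^ 3 := by
      intro i; ring
    simp_rw [hterm]
    rw [Finset.sum_add_distrib, Finset.sum_add_distrib, Finset.sum_add_distrib,
      ← Finset.mul_sum, ← Finset.mul_sum, h0, hsum2, hsum3,
      Finset.sum_const, Finset.card_univ, Fintype.card_fin, nsmul_eq_mul]
    ring
  have hzero : ∀ i ∈ Finset.univ, (μ i - lam) ^ 2 * (μ i + ((n : ℝ) - 1) * lam) = 0 := by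
    rw [← Finset.sum_eq_zero_iff_of_nonneg]
    · exact hid
    · intro i _
      exact mul_nonneg (sq_nonneg _) (hbd i)
  have hdich : ∀ i : Fin n, μ i = lam ∨ μ i = -((n : ℝ) - 1) * lam := by
    intro i
    rcases mul_eq_zero.mp (hzero i (Finset.mem_univ i)) with h | h
    · left; have := pow_eq_zero_iff (n := 2) (by norm_num) |>.mp h; linarith
    · right; linarith
  rcases eq_or_lt_of_le hlam with hlam0 | hlampos
  · -- lam = 0 : everything vanishes
    refine ⟨0, le_refl 0, ⟨0, by omega⟩, funext fun i => ?_⟩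
    have : μ i = 0 := by rcases hdich i with h | h <;> rw [h, ← hlam0] <;> ring
    rw [this]; split <;> ring
  · set S := Finset.univ.filter (fun i : Fin n => μ i = -((n : ℝ) - 1) * lam) with hS_def
    have hnotS : ∀ i ∉ S, μ i = lam := by
      intro i hi
      rcases hdich i with h | h
      · exact h
      · exact absurd (Finset.mem_filter.mpr ⟨Finset.mem_univ i, h⟩) hi
    have hsplit := Finset.sum_filter_add_sum_filter_not Finset.univ
      (fun i : Fin n => μ i = -((n : ℝ) - 1) * lam) μ
    have hSsum : ∑ i ∈ S, μ i = (#S : ℝ) * (-((n : ℝ) - 1) * lam) := by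
      rw [Finset.sum_congr rfl (fun i hi => (Finset.mem_filter.mp hi).2),
        Finset.sum_const, nsmul_eq_mul]
    have hScsum : ∑ i ∈ Finset.univ.filter (fun i : Fin n => ¬ μ i = -((n : ℝ) - 1) * lam), μ i
        = ((n : ℝ) - (#S : ℝ)) * lam := by
      rw [Finset.sum_congr rfl (fun i hi => hnotS i (by
        intro hmem
        exact (Finset.mem_filter.mp hi).2 (Finset.mem_filter.mp hmem).2)),
        Finset.sum_const, nsmul_eq_mul, Finset.filter_not, Finset.card_sdiff_of_subset
          (Finset.filter_subset _ _), Finset.card_univ, Fintype.card_fin,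
        Nat.cast_sub (le_trans (Finset.card_filter_le _ _) (le_of_eq
          (by rw [Finset.card_univ, Fintype.card_fin])))]
    have hk : ((#S : ℝ)) = 1 := by
      rw [hS_def] at hSsum hScsum ⊢
      rw [hSsum, hScsum] at hsplit
      rw [h0] at hsplit
      have hnl : (0:ℝ) < (n : ℝ) * lam := mul_pos (by linarith) hlampos
      have h1 : ((#(Finset.univ.filter (fun i : Fin n => μ i = -((n : ℝ) - 1) * lam)) : ℝ))
          * ((n : ℝ) * lam) = 1 * ((n : ℝ) * lam) := by linear_combination -hsplit
      exact mul_right_cancel₀ hnl.ne' h1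
    have hcard1 : #S = 1 := by exact_mod_cast hk
    obtain ⟨j, hj⟩ := Finset.card_eq_one.mp hcard1
    refine ⟨lam, hlam, j, funext fun i => ?_⟩
    by_cases hij : i = j
    · subst hij
      have : i ∈ S := by rw [hj]; exact Finset.mem_singleton_self i
      simp only [if_pos rfl]
      exact (Finset.mem_filter.mp this).2
    · have : i ∉ S := by rw [hj]; simpa using hij
      simp only [if_neg hij]
      exact hnotS i this

private lemma okumura_conj_mul {n : ℕ} (P Q D E : Matrix (Fin n) (Fin n) ℝ) (h : Q * P = 1) :
    (P * D * Q) * (P * E * Q) = P * (D * E) * Q := by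
  calc (P * D * Q) * (P * E * Q) = P * D * (Q * P) * E * Q := by
        simp only [Matrix.mul_assoc]
    _ = P * (D * E) * Q := by rw [h, Matrix.mul_one]; simp only [Matrix.mul_assoc]

private lemma okumura_trace_conj {n : ℕ} (P Q D : Matrix (Fin n) (Fin n) ℝ) (h : Q * P = 1) :
    Matrix.trace (P * D * Q) = Matrix.trace D := by
  rw [Matrix.trace_mul_cycle, h, Matrix.one_mul]

theorem okumura_equality_case {n : ℕ} (hn : 3 ≤ n) (A : Matrix (Fin n) (Fin n) ℝ)
    (hA : A.IsSymm) (htr : A.trace = 0) :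
    Matrix.trace (A * A * A) =
      -(((n : ℝ) - 2) / Real.sqrt ((n : ℝ) * ((n : ℝ) - 1))) *
        (Real.sqrt (Matrix.trace (A * A))) ^ 3 ↔
    ∃ lam : ℝ, 0 ≤ lam ∧ ∃ P : Matrix (Fin n) (Fin n) ℝ, P * P.transpose = 1 ∧ ∃ j : Fin n,
      A = P * Matrix.diagonal (fun i => if i = j then -((n : ℝ) - 1) * lam else lam) * P.transpose := by
  have hn3 : (3 : ℝ) ≤ (n : ℝ) := by exact_mod_cast hn
  constructor
  · intro heq
    -- spectral theorem
    have hA' : A.IsHermitian := by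
      rw [Matrix.IsHermitian, Matrix.conjTranspose_eq_transpose_of_trivial]
      exact hA
    set U : Matrix (Fin n) (Fin n) ℝ := (hA'.eigenvectorUnitary : Matrix (Fin n) (Fin n) ℝ)
      with hU_def
    have hUU : U * star U = 1 := (Matrix.mem_unitaryGroup_iff).mp hA'.eigenvectorUnitary.2
    have hUU' : star U * U = 1 := (Matrix.mem_unitaryGroup_iff').mp hA'.eigenvectorUnitary.2
    set μ : Fin n → ℝ := hA'.eigenvalues with hμ_def
    have hspec : A = U * Matrix.diagonal μ * star U := by
      have h := hA'.spectral_theorem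
      have : Matrix.diagonal ((RCLike.ofReal : ℝ → ℝ) ∘ hA'.eigenvalues) = Matrix.diagonal μ := by
        congr 1
      rwa [this] at h
    have htrD : ∀ D : Matrix (Fin n) (Fin n) ℝ, Matrix.trace (U * D * star U) = Matrix.trace D :=
      fun D => okumura_trace_conj U (star U) D hUU'
    have htr1 : ∑ i, μ i = 0 := by
      rw [← Matrix.trace_diagonal, ← htrD (Matrix.diagonal μ), ← hspec, htr]
    have htr2 : Matrix.trace (A * A) = ∑ i, (μ i) ^ 2 := by
      rw [hspec, okumura_conj_mul _ _ _ _ hUU', htrD, Matrix.diagonal_mul_diagonal,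
        Matrix.trace_diagonal]
      exact Finset.sum_congr rfl fun i _ => (sq (μ i)).symm
    have htr3 : Matrix.trace (A * A * A) = ∑ i, (μ i) ^ 3 := by
      rw [hspec, okumura_conj_mul _ _ _ _ hUU', okumura_conj_mul _ _ _ _ hUU', htrD,
        Matrix.diagonal_mul_diagonal, Matrix.diagonal_mul_diagonal, Matrix.trace_diagonal]
      exact Finset.sum_congr rfl fun i _ => by ring
    rw [htr2, htr3] at heq
    obtain ⟨lam, hlam, j, hμeq⟩ := okumura_scalar hn μ htr1 heq
    have hstar : star U = U.transpose := by
      rw [Matrix.star_eq_conjTranspose, Matrix.conjTranspose_eq_transpose_of_trivial]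
    refine ⟨lam, hlam, U, ?_, j, ?_⟩
    · rw [← hstar]; exact hUU
    · rw [← hstar, ← hμeq]; exact hspec
  · rintro ⟨lam, hlam, P, hP, j, rfl⟩
    have hP' : P.transpose * P = 1 := mul_eq_one_comm.mp hP
    set d : Fin n → ℝ := fun i => if i = j then -((n : ℝ) - 1) * lam else lam with hd_def
    have htrD : ∀ D : Matrix (Fin n) (Fin n) ℝ,
        Matrix.trace (P * D * P.transpose) = Matrix.trace D :=
      fun D => okumura_trace_conj P P.transpose D hP'
    have hsum2 : ∑ i, d i * d i = (n : ℝ) * ((n : ℝ) - 1) * lam ^ 2 := by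
      have h1 : ∀ i : Fin n, d i * d i =
          if i = j then (((n : ℝ) - 1) * lam) ^ 2 else lam ^ 2 := by
        intro i; rw [hd_def]; dsimp only; split <;> ring
      simp_rw [h1]
      rw [okumura_sum_ite]
      ring
    have hsum3 : ∑ i, d i * d i * d i = -((n : ℝ) * ((n : ℝ) - 1) * ((n : ℝ) - 2)) * lam ^ 3 := by
      have h1 : ∀ i : Fin n, d i * d i * d i =
          if i = j then (-((n : ℝ) - 1) * lam) ^ 3 else lam ^ 3 := by
        intro i; rw [hd_def]; dsimp only; split <;> ring
      simp_rw [h1]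
      rw [okumura_sum_ite]
      ring
    have htr2 : Matrix.trace (P * Matrix.diagonal d * P.transpose *
        (P * Matrix.diagonal d * P.transpose)) = (n : ℝ) * ((n : ℝ) - 1) * lam ^ 2 := by
      rw [okumura_conj_mul _ _ _ _ hP', htrD, Matrix.diagonal_mul_diagonal, Matrix.trace_diagonal, hsum2]
    have htr3 : Matrix.trace (P * Matrix.diagonal d * P.transpose *
        (P * Matrix.diagonal d * P.transpose) * (P * Matrix.diagonal d * P.transpose)) =
        -((n : ℝ) * ((n : ℝ) - 1) * ((n : ℝ) - 2)) * lam ^ 3 := by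
      rw [okumura_conj_mul _ _ _ _ hP', okumura_conj_mul _ _ _ _ hP', htrD, Matrix.diagonal_mul_diagonal,
        Matrix.diagonal_mul_diagonal, Matrix.trace_diagonal, hsum3]
    rw [htr2, htr3]
    have hsqrt : Real.sqrt ((n : ℝ) * ((n : ℝ) - 1) * lam ^ 2) =
        Real.sqrt ((n : ℝ) * ((n : ℝ) - 1)) * lam := by
      rw [Real.sqrt_mul (by nlinarith), Real.sqrt_sq hlam]
    rw [hsqrt, okumura_sqrt_cube hn lam hlam]
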